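/- Let H = (V, E) be a hypergraph with |E| = n hyperedges, each nonempty, and suppose there exists a vertex v ∈ V that belongs to at least 3 hyperedges of E. Then there exists an edge-discriminator λ on H whose weight satisfies Σ_{v∈V} λ(v) ≤ n(n+1)/2 − 2. -/

import Mathlib

open Finset

noncomputable section

namespace EdgeDisc

variable {V : Type*} [DecidableEq V] [Fintype V]

/-- partial sum of the weights `pr ∘ ι` over vertices of `e` with index `< i` -/
def psum (ι : V → ℕ) (pr : ℕ → ℕ) (e : Finset V) (i : ℕ) : ℕ :=
  ∑ w ∈ e.filter (fun w => ι w < i), pr (ι w)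

/-- ordered pairs of edges whose symmetric difference has its maximum index at `i`,
oriented so that the top vertex belongs to the first component -/
def PairsAt (E : Finset (Finset V)) (ι : V → ℕ) (i : ℕ) : Finset (Finset V × Finset V) :=
  (E ×ˢ E).filter (fun p =>
    (∃ v, ι v = i ∧ v ∈ p.1 ∧ v ∉ p.2) ∧
    (∀ w ∈ (p.1 \ p.2) ∪ (p.2 \ p.1), ι w ≤ i))

/-- edges whose maximum index is `i` -/
def Tops (E : Finset (Finset V)) (ι : V → ℕ) (i : ℕ) : Finset (Finset V) :=
  E.filter (fun e => ∃ v ∈ e, ι v = i ∧ ∀ w ∈ e, ι w ≤ i)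

def BadAt (E : Finset (Finset V)) (ι : V → ℕ) (pr : ℕ → ℕ) (i : ℕ) : Finset ℕ :=
  (PairsAt E ι i).image (fun p => psum ι pr p.2 i - psum ι pr p.1 i)
    ∪ (Tops E ι i).image (fun _ => 0)

lemma avoid_nonempty (s : Finset ℕ) : (range (s.card + 1) \ s).Nonempty := by
  rw [sdiff_nonempty]
  intro h
  have h2 := card_le_card h
  rw [card_range] at h2
  omega

def step (E : Finset (Finset V)) (ι : V → ℕ) (pr : ℕ → ℕ) (i : ℕ) : ℕ :=
  ((range ((BadAt E ι pr i).card + 1)) \ (BadAt E ι pr i)).min' (avoid_nonempty _)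

def G (E : Finset (Finset V)) (ι : V → ℕ) : ℕ → ℕ → ℕ
  | 0 => fun _ => 0
  | (i+1) => Function.update (G E ι i) i (step E ι (G E ι i) i)

def fval (E : Finset (Finset V)) (ι : V → ℕ) (i : ℕ) : ℕ := G E ι (i+1) i

def lamOf (E : Finset (Finset V)) (ι : V → ℕ) (v : V) : ℕ := fval E ι (ι v)

variable (E : Finset (Finset V)) (ι : V → ℕ)

lemma G_eq_fval : ∀ j i, i < j → G E ι j i = fval E ι i := by
  intro j
  induction j with
  | zero => intro i hi; omega
  | succ j ih =>
      intro i hi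
      rcases Nat.lt_succ_iff_lt_or_eq.mp hi with h | h
      · have : G E ι (j+1) i = G E ι j i := by
          show Function.update (G E ι j) j (step E ι (G E ι j) j) i = G E ι j i
          exact Function.update_of_ne (by omega) _ _
        rw [this, ih i h]
      · subst h; rfl

lemma psum_G_eq (i : ℕ) (e : Finset V) :
    psum ι (G E ι i) e i = psum ι (fval E ι) e i := by
  unfold psum
  refine Finset.sum_congr rfl ?_
  intro w hw
  rw [mem_filter] at hw
  rw [G_eq_fval E ι i (ι w) hw.2]

lemma badAt_G_eq (i : ℕ) :
    BadAt E ι (G E ι i) i = BadAt E ι (fval E ι) i := by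
  unfold BadAt
  congr 1
  apply Finset.image_congr
  intro p _
  dsimp only
  rw [psum_G_eq, psum_G_eq]

lemma fval_eq_step (i : ℕ) : fval E ι i = step E ι (G E ι i) i := by
  show Function.update (G E ι i) i (step E ι (G E ι i) i) i = _
  exact Function.update_self _ _ _

lemma fval_spec (i : ℕ) :
    fval E ι i ∉ BadAt E ι (fval E ι) i ∧
      fval E ι i ≤ (BadAt E ι (fval E ι) i).card := by
  have h := Finset.min'_mem _ (avoid_nonempty (BadAt E ι (G E ι i) i))
  rw [Finset.mem_sdiff, Finset.mem_range] at h
  rw [fval_eq_step E ι i]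
  rw [← badAt_G_eq E ι i]
  unfold step
  exact ⟨h.2, by omega⟩


/-- sum decomposition of an edge sum at level `i` -/
lemma sum_split (e : Finset V) (i : ℕ) :
    ∑ w ∈ e, lamOf E ι w =
      psum ι (fval E ι) e i + (∑ w ∈ e.filter (fun w => ι w = i), fval E ι (ι w))
        + ∑ w ∈ e.filter (fun w => i < ι w), lamOf E ι w := by
  have h1 : ∑ w ∈ e, lamOf E ι w
      = ∑ w ∈ e.filter (fun w => ι w < i), lamOf E ι w
        + ∑ w ∈ e.filter (fun w => ¬ ι w < i), lamOf E ι w :=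
    (Finset.sum_filter_add_sum_filter_not e _ _).symm
  have h2 : ∑ w ∈ e.filter (fun w => ¬ ι w < i), lamOf E ι w
      = ∑ w ∈ (e.filter (fun w => ¬ ι w < i)).filter (fun w => ι w = i), lamOf E ι w
        + ∑ w ∈ (e.filter (fun w => ¬ ι w < i)).filter (fun w => ¬ ι w = i), lamOf E ι w :=
    (Finset.sum_filter_add_sum_filter_not _ _ _).symm
  have h3 : (e.filter (fun w => ¬ ι w < i)).filter (fun w => ι w = i)
      = e.filter (fun w => ι w = i) := by
    rw [Finset.filter_filter]
    apply Finset.filter_congr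
    intro w _
    constructor
    · rintro ⟨_, h⟩; exact h
    · intro h; exact ⟨by omega, h⟩
  have h4 : (e.filter (fun w => ¬ ι w < i)).filter (fun w => ¬ ι w = i)
      = e.filter (fun w => i < ι w) := by
    rw [Finset.filter_filter]
    apply Finset.filter_congr
    intro w _
    constructor
    · rintro ⟨h, h'⟩; omega
    · intro h; omega
  rw [h1, h2, h3, h4]
  simp only [psum, lamOf, Nat.add_assoc]

lemma highpart_eq {e g : Finset V} {i : ℕ}
    (hmax : ∀ w ∈ (e \ g) ∪ (g \ e), ι w ≤ i) :
    e.filter (fun w => i < ι w) = g.filter (fun w => i < ι w) := by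
  ext w
  simp only [mem_filter]
  constructor
  · rintro ⟨hw, hi⟩
    refine ⟨?_, hi⟩
    by_contra hng
    have := hmax w (by simp [hw, hng])
    omega
  · rintro ⟨hw, hi⟩
    refine ⟨?_, hi⟩
    by_contra hng
    have := hmax w (by simp [hw, hng])
    omega

lemma key_ne (hι : Function.Injective ι) {e g : Finset V} (he : e ∈ E) (hg : g ∈ E)
    {v : V} (hv : v ∈ e) (hv' : v ∉ g)
    (hmax : ∀ w ∈ (e \ g) ∪ (g \ e), ι w ≤ ι v) :
    ∑ w ∈ e, lamOf E ι w ≠ ∑ w ∈ g, lamOf E ι w := by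
  set i := ι v with hi
  have hp : (e, g) ∈ PairsAt E ι i := by
    unfold PairsAt
    rw [mem_filter, mem_product]
    exact ⟨⟨he, hg⟩, ⟨v, rfl, hv, hv'⟩, hmax⟩
  have hbad : psum ι (fval E ι) g i - psum ι (fval E ι) e i ∈ BadAt E ι (fval E ι) i :=
    Finset.mem_union_left _ (Finset.mem_image.2 ⟨(e, g), hp, rfl⟩)
  have hnot := (fval_spec E ι i).1
  have hse : e.filter (fun w => ι w = i) = {v} := by
    ext w
    simp only [mem_filter, mem_singleton]
    constructor
    · rintro ⟨hw, hwi⟩; exact hι hwi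
    · rintro rfl; exact ⟨hv, rfl⟩
  have hsg : g.filter (fun w => ι w = i) = (∅ : Finset V) := by
    ext w
    simp only [mem_filter, Finset.notMem_empty, iff_false, not_and]
    intro hw hwi
    exact hv' ((hι hwi) ▸ hw)
  have hde := sum_split E ι e i
  have hdg := sum_split E ι g i
  rw [hse, Finset.sum_singleton] at hde
  rw [hsg, Finset.sum_empty] at hdg
  rw [highpart_eq ι hmax] at hde
  intro heq
  rw [hde, hdg] at heq
  rw [← hi] at heq
  apply hnot
  have : fval E ι i = psum ι (fval E ι) g i - psum ι (fval E ι) e i := by omega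
  rw [← this] at hbad
  exact hbad

lemma pos_sum {e : Finset V} (he : e ∈ E) (hne : e.Nonempty) :
    0 < ∑ w ∈ e, lamOf E ι w := by
  obtain ⟨v, hv, hmaxv⟩ := Finset.exists_max_image e ι hne
  have htop : e ∈ Tops E ι (ι v) := by
    unfold Tops
    rw [mem_filter]
    exact ⟨he, v, hv, rfl, hmaxv⟩
  have h0 : (0 : ℕ) ∈ BadAt E ι (fval E ι) (ι v) :=
    Finset.mem_union_right _ (Finset.mem_image.2 ⟨e, htop, rfl⟩)
  have hnot := (fval_spec E ι (ι v)).1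
  have hfv : 0 < fval E ι (ι v) := by
    rcases Nat.eq_zero_or_pos (fval E ι (ι v)) with h | h
    · exact absurd (h ▸ h0) hnot
    · exact h
  calc 0 < fval E ι (ι v) := hfv
    _ = lamOf E ι v := rfl
    _ ≤ ∑ w ∈ e, lamOf E ι w := Finset.single_le_sum (fun _ _ => Nat.zero_le _) hv


lemma pairs_disjoint (hι : Function.Injective ι) :
    ∀ v ∈ (Finset.univ : Finset V), ∀ v' ∈ (Finset.univ : Finset V), v ≠ v' →
      Disjoint (PairsAt E ι (ι v)) (PairsAt E ι (ι v')) := by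
  intro v _ v' _ hne
  rw [Finset.disjoint_left]
  intro p hp hp'
  unfold PairsAt at hp hp'
  rw [mem_filter] at hp hp'
  obtain ⟨-, ⟨u, hu, hu1, hu2⟩, hb⟩ := hp
  obtain ⟨-, ⟨u', hu', hu1', hu2'⟩, hb'⟩ := hp'
  have h1 : ι u ≤ ι v' := hb' u (Finset.mem_union_left _ (Finset.mem_sdiff.2 ⟨hu1, hu2⟩))
  have h2 : ι u' ≤ ι v := hb u' (Finset.mem_union_left _ (Finset.mem_sdiff.2 ⟨hu1', hu2'⟩))
  exact hne (hι (by omega))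

/-- any element of any `PairsAt` consists of two distinct edges with an oriented top -/
lemma pairsAt_elim {p : Finset V × Finset V} {i : ℕ} (hp : p ∈ PairsAt E ι i) :
    p.1 ∈ E ∧ p.2 ∈ E ∧ p.1 ≠ p.2 := by
  unfold PairsAt at hp
  rw [mem_filter, mem_product] at hp
  obtain ⟨⟨h1, h2⟩, ⟨u, _, hu1, hu2⟩, -⟩ := hp
  refine ⟨h1, h2, ?_⟩
  intro h
  exact hu2 (h ▸ hu1)

lemma biUnion_pairs_card (hι : Function.Injective ι) :
    ((Finset.univ : Finset V).biUnion (fun v => PairsAt E ι (ι v))).card ≤ E.card.choose 2 := by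
  rw [← Finset.card_powersetCard 2 E]
  apply Finset.card_le_card_of_injOn (fun p => ({p.1, p.2} : Finset (Finset V)))
  · intro p hp
    rw [Finset.mem_coe, Finset.mem_biUnion] at hp
    obtain ⟨v, -, hp⟩ := hp
    obtain ⟨h1, h2, hne⟩ := pairsAt_elim E ι hp
    rw [Finset.mem_coe, Finset.mem_powersetCard]
    constructor
    · intro x hx
      rw [Finset.mem_insert, Finset.mem_singleton] at hx
      rcases hx with rfl | rfl
      · exact h1
      · exact h2
    · exact Finset.card_pair hne
  · intro p hp q hq hpq
    dsimp only at hpq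
    rw [Finset.mem_coe, Finset.mem_biUnion] at hp hq
    obtain ⟨v, -, hp⟩ := hp
    obtain ⟨v', -, hq⟩ := hq
    obtain ⟨-, -, hnep⟩ := pairsAt_elim E ι hp
    obtain ⟨-, -, hneq⟩ := pairsAt_elim E ι hq
    -- doubleton equality
    have h1 : p.1 ∈ ({q.1, q.2} : Finset (Finset V)) := by
      rw [← hpq]; exact Finset.mem_insert_self _ _
    have h2 : p.2 ∈ ({q.1, q.2} : Finset (Finset V)) := by
      rw [← hpq]; exact Finset.mem_insert_of_mem (Finset.mem_singleton_self _)
    rw [Finset.mem_insert, Finset.mem_singleton] at h1 h2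
    rcases h1 with h1 | h1
    · rcases h2 with h2 | h2
      · exact absurd (h1.trans h2.symm) hnep
      · exact Prod.ext h1 h2
    · rcases h2 with h2 | h2
      · -- p = (q.2, q.1) : both orientations present, contradiction
        exfalso
        unfold PairsAt at hp hq
        rw [mem_filter] at hp hq
        obtain ⟨-, ⟨u, hu, hu1, hu2⟩, hb⟩ := hp
        obtain ⟨-, ⟨u', hu', hu1', hu2'⟩, hb'⟩ := hq
        rw [h1] at hu1
        rw [h2] at hu2
        -- u ∈ q.2 \ q.1 ; u' ∈ q.1 \ q.2
        have hm1 : ι u ≤ ι v' := by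
          refine hb' u ?_
          exact Finset.mem_union_right _ (Finset.mem_sdiff.2 ⟨hu1, hu2⟩)
        have hm2 : ι u' ≤ ι v := by
          refine hb u' ?_
          rw [h1, h2]
          exact Finset.mem_union_right _ (Finset.mem_sdiff.2 ⟨hu1', hu2'⟩)
        have : u = u' := hι (by omega)
        subst this
        exact hu2' hu1
      · exact absurd (h1.trans h2.symm) hnep


lemma fval_le_bound (i : ℕ) :
    fval E ι i ≤ (PairsAt E ι i).card + ((Tops E ι i).image (fun _ => (0:ℕ))).card := by
  have h := (fval_spec E ι i).2
  calc fval E ι i ≤ (BadAt E ι (fval E ι) i).card := h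
    _ ≤ ((PairsAt E ι i).image
          (fun p => psum ι (fval E ι) p.2 i - psum ι (fval E ι) p.1 i)).card
        + ((Tops E ι i).image (fun _ => (0:ℕ))).card := Finset.card_union_le _ _
    _ ≤ (PairsAt E ι i).card + ((Tops E ι i).image (fun _ => (0:ℕ))).card := by
        exact Nat.add_le_add_right (Finset.card_image_le) _

lemma weight_le (hι : Function.Injective ι) (v0 : V) (hmax0 : ∀ w, ι w ≤ ι v0)
    (e1 e2 e3 : Finset V) (h1 : e1 ∈ E) (h2 : e2 ∈ E) (h3 : e3 ∈ E)
    (h12 : e1 ≠ e2) (h13 : e1 ≠ e3) (h23 : e2 ≠ e3)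
    (hv1 : v0 ∈ e1) (hv2 : v0 ∈ e2) (hv3 : v0 ∈ e3) :
    ∑ v, lamOf E ι v ≤ E.card.choose 2 + (E.card - 2) := by
  classical
  have hstep1 : ∑ v, lamOf E ι v
      ≤ ∑ v, (PairsAt E ι (ι v)).card
        + ∑ v, ((Tops E ι (ι v)).image (fun _ => (0:ℕ))).card := by
    rw [← Finset.sum_add_distrib]
    exact Finset.sum_le_sum (fun v _ => fval_le_bound E ι (ι v))
  have hpairs : ∑ v, (PairsAt E ι (ι v)).card ≤ E.card.choose 2 := by
    rw [← Finset.card_biUnion (pairs_disjoint E ι hι)]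
    exact biUnion_pairs_card E ι hι
  -- the tops part
  set W : Finset V := Finset.univ.filter (fun v => (Tops E ι (ι v)).Nonempty) with hW
  have htops1 : ∑ v, ((Tops E ι (ι v)).image (fun _ => (0:ℕ))).card ≤ W.card := by
    have : ∀ v ∈ (Finset.univ : Finset V),
        ((Tops E ι (ι v)).image (fun _ => (0:ℕ))).card ≤ (if v ∈ W then 1 else 0) := by
      intro v _
      by_cases hv : (Tops E ι (ι v)).Nonempty
      · have hvW : v ∈ W := by rw [hW, mem_filter]; exact ⟨Finset.mem_univ _, hv⟩
        rw [if_pos hvW]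
        have : (Tops E ι (ι v)).image (fun _ => (0:ℕ)) ⊆ {0} := by
          intro x hx
          rw [Finset.mem_image] at hx
          obtain ⟨-, -, rfl⟩ := hx
          exact Finset.mem_singleton_self _
        calc _ ≤ ({0} : Finset ℕ).card := Finset.card_le_card this
          _ = 1 := Finset.card_singleton _
      · rw [Finset.not_nonempty_iff_eq_empty] at hv
        rw [hv]
        simp
    calc ∑ v, ((Tops E ι (ι v)).image (fun _ => (0:ℕ))).card
        ≤ ∑ v, (if v ∈ W then 1 else 0) := Finset.sum_le_sum this
      _ = W.card := by rw [Finset.sum_ite_mem, Finset.univ_inter, Finset.card_eq_sum_ones]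
  -- key: every member of W is the top of one of its edges; use injection into E minus two edges
  have hWprop : ∀ v ∈ W, ∃ e, e ∈ Tops E ι (ι v) := by
    intro v hv
    rw [hW, mem_filter] at hv
    exact hv.2
  have htopElim : ∀ (v : V) (e : Finset V), e ∈ Tops E ι (ι v) →
      e ∈ E ∧ v ∈ e ∧ ∀ w ∈ e, ι w ≤ ι v := by
    intro v e hecond
    unfold Tops at hecond
    rw [mem_filter] at hecond
    obtain ⟨heE, u, hu1, hu2, hu3⟩ := hecond
    have : u = v := hι hu2
    subst this
    exact ⟨heE, hu1, hu3⟩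
  set F : V → Finset V := fun v =>
    if v = v0 then e1 else (if h : (Tops E ι (ι v)).Nonempty then h.choose else e1) with hF
  have hFspec : ∀ v ∈ W, v ∈ F v ∧ ∀ w ∈ F v, ι w ≤ ι v := by
    intro v hv
    by_cases hveq : v = v0
    · subst hveq
      rw [hF]
      simp only [if_pos rfl]
      exact ⟨hv1, fun w _ => hmax0 w⟩
    · obtain ⟨e, he⟩ := hWprop v hv
      have hne : (Tops E ι (ι v)).Nonempty := ⟨e, he⟩
      rw [hF]
      simp only [if_neg hveq, dif_pos hne]
      have := htopElim v _ hne.choose_spec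
      exact ⟨this.2.1, this.2.2⟩
  have hFmem : ∀ v ∈ W, F v ∈ (E.erase e2).erase e3 := by
    intro v hv
    by_cases hveq : v = v0
    · subst hveq
      rw [hF]
      simp only [if_pos rfl]
      rw [Finset.mem_erase, Finset.mem_erase]
      exact ⟨h13, h12, h1⟩
    · obtain ⟨e, he⟩ := hWprop v hv
      have hne : (Tops E ι (ι v)).Nonempty := ⟨e, he⟩
      rw [hF]
      simp only [if_neg hveq, dif_pos hne]
      have hspec := htopElim v _ hne.choose_spec
      rw [Finset.mem_erase, Finset.mem_erase]
      refine ⟨?_, ?_, hspec.1⟩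
      · intro hcon
        apply hveq
        apply hι
        have hb := hspec.2.2 v0 (hcon ▸ hv3)
        have := hmax0 v
        omega
      · intro hcon
        apply hveq
        apply hι
        have hb := hspec.2.2 v0 (hcon ▸ hv2)
        have := hmax0 v
        omega
  have hFinj : ∀ v ∈ W, ∀ v' ∈ W, F v = F v' → v = v' := by
    intro v hv v' hv' heq
    obtain ⟨hm, hb⟩ := hFspec v hv
    obtain ⟨hm', hb'⟩ := hFspec v' hv'
    apply hι
    have l1 := hb' v (heq ▸ hm)
    have l2 := hb v' (heq ▸ hm')
    omega
  have hWle : W.card ≤ E.card - 2 := by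
    have : W.card ≤ ((E.erase e2).erase e3).card := by
      apply Finset.card_le_card_of_injOn F hFmem
      intro a ha b hb hab
      exact hFinj a ha b hb hab
    have hc3 : e3 ∈ E.erase e2 := Finset.mem_erase.2 ⟨h23.symm, h3⟩
    rw [Finset.card_erase_of_mem hc3, Finset.card_erase_of_mem h2] at this
    omega
  calc ∑ v, lamOf E ι v
      ≤ ∑ v, (PairsAt E ι (ι v)).card
        + ∑ v, ((Tops E ι (ι v)).image (fun _ => (0:ℕ))).card := hstep1
    _ ≤ E.card.choose 2 + (E.card - 2) := Nat.add_le_add hpairs (htops1.trans hWle)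

end EdgeDisc

end

/-- `lam` is an edge-discriminator on the hypergraph with hyperedge family `E`. -/
def IsEdgeDiscriminator {V : Type*} (E : Finset (Finset V)) (lam : V → ℕ) : Prop :=
  (∀ e ∈ E, 0 < ∑ v ∈ e, lam v) ∧
  (∀ e ∈ E, ∀ f ∈ E, e ≠ f → ∑ v ∈ e, lam v ≠ ∑ v ∈ f, lam v)

theorem upper_bound_degree_three {V : Type*} [Fintype V] [DecidableEq V]
    (E : Finset (Finset V)) (n : ℕ) (hcard : E.card = n)
    (hne : ∀ e ∈ E, e.Nonempty)
    (hdeg : ∃ v : V, 3 ≤ (E.filter (fun e => v ∈ e)).card) :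
    ∃ lam : V → ℕ, IsEdgeDiscriminator E lam ∧
      ∑ v, lam v ≤ n * (n + 1) / 2 - 2 := by
  classical
  obtain ⟨v0, hv0⟩ := hdeg
  have hn3 : 3 ≤ n := by
    have := Finset.card_filter_le E (fun e => v0 ∈ e)
    omega
  -- the injective index function with `v0` on top
  set kV := Fintype.card V with hkV
  set eF := Fintype.equivFin V with heF
  set ι : V → ℕ := fun v => if v = v0 then kV else (eF v : ℕ) with hιdef
  have hιv0 : ι v0 = kV := by simp [hιdef]
  have hlt : ∀ w, w ≠ v0 → ι w < kV := by
    intro w hw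
    have : ι w = (eF w : ℕ) := by simp [hιdef, hw]
    rw [this, hkV]
    exact (eF w).isLt
  have hι : Function.Injective ι := by
    intro a b hab
    by_cases ha : a = v0
    · by_cases hb : b = v0
      · rw [ha, hb]
      · exfalso
        rw [ha, hιv0] at hab
        have := hlt b hb
        omega
    · by_cases hb : b = v0
      · exfalso
        rw [hb, hιv0] at hab
        have := hlt a ha
        omega
      · have h1 : ι a = (eF a : ℕ) := by simp [hιdef, ha]
        have h2 : ι b = (eF b : ℕ) := by simp [hιdef, hb]
        rw [h1, h2] at hab
        exact eF.injective (Fin.val_injective hab)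
  have hmax0 : ∀ w, ι w ≤ ι v0 := by
    intro w
    by_cases hw : w = v0
    · rw [hw]
    · rw [hιv0]
      exact le_of_lt (hlt w hw)
  -- three distinct edges through v0
  obtain ⟨S, hSsub, hS3⟩ := Finset.exists_subset_card_eq hv0
  obtain ⟨e1, e2, e3, h12, h13, h23, rfl⟩ := Finset.card_eq_three.1 hS3
  have hmem : ∀ e ∈ ({e1, e2, e3} : Finset (Finset V)), e ∈ E ∧ v0 ∈ e := by
    intro e he
    have := hSsub he
    rw [Finset.mem_filter] at this
    exact this
  obtain ⟨he1, hv1⟩ := hmem e1 (by simp)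
  obtain ⟨he2, hv2⟩ := hmem e2 (by simp)
  obtain ⟨he3, hv3⟩ := hmem e3 (by simp)
  refine ⟨EdgeDisc.lamOf E ι, ⟨?_, ?_⟩, ?_⟩
  · intro e he
    exact EdgeDisc.pos_sum E ι he (hne e he)
  · intro e he f hf hef
    have hΔ : ((e \ f) ∪ (f \ e)).Nonempty := by
      rw [Finset.nonempty_iff_ne_empty]
      intro hcon
      rw [Finset.union_eq_empty] at hcon
      apply hef
      apply Finset.Subset.antisymm
      · exact Finset.sdiff_eq_empty_iff_subset.1 hcon.1
      · exact Finset.sdiff_eq_empty_iff_subset.1 hcon.2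
    obtain ⟨v, hvmem, hvb⟩ := Finset.exists_max_image _ ι hΔ
    rw [Finset.mem_union] at hvmem
    rcases hvmem with hv | hv
    · rw [Finset.mem_sdiff] at hv
      exact EdgeDisc.key_ne E ι hι he hf hv.1 hv.2 hvb
    · rw [Finset.mem_sdiff] at hv
      have hvb' : ∀ w ∈ (f \ e) ∪ (e \ f), ι w ≤ ι v := by
        intro w hw
        apply hvb
        rwa [Finset.union_comm]
      exact (EdgeDisc.key_ne E ι hι hf he hv.1 hv.2 hvb').symm
  · have hW := EdgeDisc.weight_le E ι hι v0 hmax0 e1 e2 e3 he1 he2 he3 h12 h13 h23 hv1 hv2 hv3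
    rw [hcard] at hW
    refine le_trans hW ?_
    -- arithmetic : n.choose 2 + (n - 2) ≤ n * (n+1) / 2 - 2  for n ≥ 3
    obtain ⟨m, rfl⟩ : ∃ m, n = m + 3 := ⟨n - 3, by omega⟩
    have hch : (m + 3).choose 2 = (m + 3) * ((m + 3) - 1) / 2 := Nat.choose_two_right _
    have hsub : (m + 3) - 1 = m + 2 := by omega
    rw [hsub] at hch
    obtain ⟨k, hk⟩ := Nat.even_mul_succ_self (m + 2)
    have hk' : (m + 3) * (m + 2) = k + k := by
      rw [← hk]
      ring
    have hrel : (m + 3) * ((m + 3) + 1) = (m + 3) * (m + 2) + 2 * (m + 3) := by ring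
    have hchk : (m + 3).choose 2 = k := by
      rw [hch]
      omega
    rw [hchk]
    omega
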